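/- For the signed graph Ŝ_{n,k} obtained from the complete graph K_n by replacing each edge with a negative path of length k (a path of length k containing an odd number of negative edges, e.g., all edges negative when k is odd, or exactly one negative edge), the chromatic number of the exact-distance -k graph of Ŝ_{n,k} equals n. -/

import Mathlib

open SimpleGraph

/-- The number of negative edges of a walk, where `σ e = true` means edge `e` is negative. -/
def negCount {V : Type} {G : SimpleGraph V} (σ : Sym2 V → Bool) {x y : V}
    (p : G.Walk x y) : ℕ :=
  (p.edges.filter (fun e => σ e)).length

/-- A walk is negative if it contains an odd number of negative edges. -/
def IsNegWalk {V : Type} {G : SimpleGraph V} (σ : Sym2 V → Bool) {x y : V}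
    (p : G.Walk x y) : Prop :=
  Odd (negCount σ p)

/-- The exact-distance `-k` graph of the signed graph `(G, σ)`:
`xy` is an edge iff `d_G(x,y) = k` and every `xy`-path of length `k` is negative. -/
def exactDistNeg {V : Type} (G : SimpleGraph V) (σ : Sym2 V → Bool) (k : ℕ) :
    SimpleGraph V :=
  SimpleGraph.fromRel (fun x y =>
    G.dist x y = k ∧ ∀ p : G.Walk x y, p.IsPath → p.length = k → IsNegWalk σ p)

/-- The strong exact-distance `-k` graph of the signed graph `(G, σ)`:
`xy` is an edge iff `d_G(x,y) = k` and some `xy`-path of length `k` is negative. -/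
def strongExactDistNeg {V : Type} (G : SimpleGraph V) (σ : Sym2 V → Bool) (k : ℕ) :
    SimpleGraph V :=
  SimpleGraph.fromRel (fun x y =>
    G.dist x y = k ∧ ∃ p : G.Walk x y, p.IsPath ∧ p.length = k ∧ IsNegWalk σ p)

/-- `WReach G L k y` : the set of vertices weakly `k`-reachable from `y` w.r.t. ordering `L`. -/
def WReach {V : Type} (G : SimpleGraph V) (L : LinearOrder V) (k : ℕ) (y : V) : Set V :=
  {x | ∃ p : G.Walk x y, p.IsPath ∧ p.length ≤ k ∧ ∀ z ∈ p.support, L.le x z}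

/-- The weak `k`-colouring number of `G`. -/
noncomputable def wcol {V : Type} (G : SimpleGraph V) (k : ℕ) : ℕ :=
  ⨅ L : LinearOrder V, ⨆ y : V, (WReach G L k y).ncard

/-- `DReach G L k y` : the set of vertices `x` such that there is an `xy`-path
`z_0, …, z_s` (`x = z_0`, `y = z_s`) of length `s ≤ k` on which `x` is the `L`-minimum
and `y ≤_L z_i` for all `⌊k/2⌋ + 1 ≤ i ≤ s`. -/
def DReach {V : Type} (G : SimpleGraph V) (L : LinearOrder V) (k : ℕ) (y : V) : Set V :=
  {x | ∃ p : G.Walk x y, p.IsPath ∧ p.length ≤ k ∧ (∀ z ∈ p.support, L.le x z) ∧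
        ∀ i, k / 2 + 1 ≤ i → i ≤ p.length → L.le y (p.support.getD i y)}

/-- The distance-`k`-colouring number of `G`. -/
noncomputable def dcol {V : Type} (G : SimpleGraph V) (k : ℕ) : ℕ :=
  ⨅ L : LinearOrder V, ⨆ y : V, (DReach G L k y).ncard

/-- `SReach G L k y` : the set of vertices strongly `k`-reachable from `y` w.r.t. `L`. -/
def SReach {V : Type} (G : SimpleGraph V) (L : LinearOrder V) (k : ℕ) (y : V) : Set V :=
  {x | ∃ p : G.Walk x y, p.IsPath ∧ p.length ≤ k ∧ (∀ z ∈ p.support, L.le x z) ∧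
        ∀ z ∈ p.support, z ≠ x → L.le y z}

/-- The strong `k`-colouring number of `G`. -/
noncomputable def scol {V : Type} (G : SimpleGraph V) (k : ℕ) : ℕ :=
  ⨅ L : LinearOrder V, ⨆ y : V, (SReach G L k y).ncard

/-- `H` is a minor of `G` (branch-set definition). -/
def IsMinor {W V : Type} (H : SimpleGraph W) (G : SimpleGraph V) : Prop :=
  ∃ B : W → Set V,
    (∀ w, (B w).Nonempty) ∧
    (∀ w, (G.induce (B w)).Connected) ∧
    (Pairwise (Function.onFun Disjoint B)) ∧
    ∀ w w', H.Adj w w' → ∃ u ∈ B w, ∃ v ∈ B w', G.Adj u v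

/-- `G` is planar iff it has no `K₅` and no `K₃,₃` minor (Wagner's theorem). -/
def IsPlanar {V : Type} (G : SimpleGraph V) : Prop :=
  ¬ IsMinor (completeGraph (Fin 5)) G ∧
  ¬ IsMinor (completeBipartiteGraph (Fin 3) (Fin 3)) G

/-- `G` is outerplanar iff it has no `K₄` and no `K₂,₃` minor. -/
def IsOuterplanar {V : Type} (G : SimpleGraph V) : Prop :=
  ¬ IsMinor (completeGraph (Fin 4)) G ∧
  ¬ IsMinor (completeBipartiteGraph (Fin 2) (Fin 3)) G

/-- `G` has treewidth at most `t` (tree-decomposition definition). -/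
def HasTreewidthLE {V : Type} (G : SimpleGraph V) (t : ℕ) : Prop :=
  ∃ (ι : Type) (T : SimpleGraph ι) (B : ι → Finset V),
    T.Connected ∧ T.IsAcyclic ∧
    (∀ v, ∃ i, v ∈ B i) ∧
    (∀ u v, G.Adj u v → ∃ i, u ∈ B i ∧ v ∈ B i) ∧
    (∀ v, (T.induce {i | v ∈ B i}).Connected) ∧
    (∀ i, (B i).card ≤ t + 1)
/-- Vertices of the `k`-subdivision of `K_n`: branch vertices plus, for each pair
`i < j`, internal vertices `0, …, k-2` of the subdividing path. -/
abbrev SnkV (n k : ℕ) : Type := Fin n ⊕ ({p : Fin n × Fin n // p.1 < p.2} × Fin (k - 1))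

def snkRel (n k : ℕ) : SnkV n k → SnkV n k → Prop
  | Sum.inl i, Sum.inr z => ((z.2 : ℕ) = 0 ∧ i = z.1.1.1) ∨ ((z.2 : ℕ) = k - 2 ∧ i = z.1.1.2)
  | Sum.inr z, Sum.inr z' => z.1 = z'.1 ∧ (z'.2 : ℕ) = (z.2 : ℕ) + 1
  | _, _ => False

/-- `S_{n,k}`: the graph obtained from `K_n` by replacing each edge with a path of length `k`. -/
def Snk (n k : ℕ) : SimpleGraph (SnkV n k) := SimpleGraph.fromRel (snkRel n k)

/-- A signature on `S_{n,k}` making each subdividing path negative: exactly the first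
edge of each subdividing path (the one at its smaller branch endpoint) is negative. -/
def snkSigma (n k : ℕ) : Sym2 (SnkV n k) → Bool :=
  Sym2.lift ⟨fun a b =>
    match a, b with
    | Sum.inl i, Sum.inr z => decide ((z.2 : ℕ) = 0 ∧ i = z.1.1.1)
    | Sum.inr z, Sum.inl i => decide ((z.2 : ℕ) = 0 ∧ i = z.1.1.1)
    | _, _ => false,
    by intro a b; cases a <;> cases b <;> rfl⟩
namespace SnkAux

open Sum SimpleGraph

variable (n k : ℕ)

/-- Truncated distance to the branch vertex `j`. -/
def mJ (j : Fin n) : SnkV n k → ℕ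
  | Sum.inl c => if c = j then 0 else k
  | Sum.inr z => if z.1.1.1 = j then (z.2 : ℕ) + 1
      else if z.1.1.2 = j then k - 1 - (z.2 : ℕ) else k + 1

/-- Parity of the number of negative edges on geodesics to `j`. -/
def parJ (j : Fin n) : SnkV n k → Bool
  | Sum.inl c => decide (c ≠ j)
  | Sum.inr z => decide (z.1.1.1 = j)

lemma lip_le {V : Type} {G : SimpleGraph V} (f : V → ℕ)
    (hf : ∀ u v, G.Adj u v → f u ≤ f v + 1) :
    ∀ {x y : V} (p : G.Walk x y), f x ≤ f y + p.length := by
  intro x y p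
  induction p with
  | nil => simp
  | cons h p ih =>
    have := hf _ _ h
    simp only [SimpleGraph.Walk.length_cons]
    omega

lemma snk_adj {u v : SnkV n k} :
    (Snk n k).Adj u v ↔ u ≠ v ∧ (snkRel n k u v ∨ snkRel n k v u) :=
  SimpleGraph.fromRel_adj _ _ _

lemma mJ_lip (hk : 2 ≤ k) (j : Fin n) :
    ∀ u v, (Snk n k).Adj u v → mJ n k j u ≤ mJ n k j v + 1 := by
  have key : ∀ u v, snkRel n k u v →
      mJ n k j u ≤ mJ n k j v + 1 ∧ mJ n k j v ≤ mJ n k j u + 1 := by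
    intro u v h
    match u, v with
    | Sum.inl i, Sum.inr z =>
      have hne : z.1.1.1 ≠ z.1.1.2 := Fin.ne_of_lt z.1.2
      obtain ⟨h0, rfl⟩ | ⟨h0, rfl⟩ := h <;>
        simp only [mJ, h0] <;> split_ifs <;> simp_all <;> omega
    | Sum.inr z, Sum.inr z' =>
      obtain ⟨hq, h1⟩ := h
      have hb : (z'.2 : ℕ) < k - 1 := z'.2.isLt
      simp only [mJ, hq, h1] <;> split_ifs <;> simp_all <;> omega
  intro u v h
  rcases (snk_adj n k).mp h with ⟨-, h | h⟩
  · exact (key u v h).1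
  · exact (key v u h).2

lemma mJ_le_length (hk : 2 ≤ k) (j : Fin n) {x : SnkV n k}
    (p : (Snk n k).Walk x (Sum.inl j)) : mJ n k j x ≤ p.length := by
  have := lip_le (mJ n k j) (mJ_lip n k hk j) p
  simpa [mJ] using this

end SnkAux
namespace SnkAux
open Sum SimpleGraph
variable (n k : ℕ)
lemma sigma_inl_inr (i : Fin n) (z : {p : Fin n × Fin n // p.1 < p.2} × Fin (k-1)) :
    snkSigma n k s(Sum.inl i, Sum.inr z) = decide ((z.2 : ℕ) = 0 ∧ i = z.1.1.1) := rfl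
lemma sigma_inr_inl (i : Fin n) (z : {p : Fin n × Fin n // p.1 < p.2} × Fin (k-1)) :
    snkSigma n k s(Sum.inr z, Sum.inl i) = decide ((z.2 : ℕ) = 0 ∧ i = z.1.1.1) := rfl
lemma sigma_inr_inr (z z' : {p : Fin n × Fin n // p.1 < p.2} × Fin (k-1)) :
    snkSigma n k s(Sum.inr z, Sum.inr z') = false := rfl
end SnkAux
namespace SnkAux
open Sum SimpleGraph
variable (n k : ℕ)
set_option maxHeartbeats 1000000 in
lemma coherA (hk : 2 ≤ k) (j : Fin n) (i : Fin n) (z)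
    (h : snkRel n k (Sum.inl i) (Sum.inr z)) :
    (mJ n k j (Sum.inl i) ≤ k → mJ n k j (Sum.inr z) + 1 = mJ n k j (Sum.inl i) →
      parJ n k j (Sum.inl i) =
        ((parJ n k j (Sum.inr z)).xor (snkSigma n k s(Sum.inl i, Sum.inr z)))) ∧
    (mJ n k j (Sum.inr z) ≤ k → mJ n k j (Sum.inl i) + 1 = mJ n k j (Sum.inr z) →
      parJ n k j (Sum.inr z) =
        ((parJ n k j (Sum.inl i)).xor (snkSigma n k s(Sum.inr z, Sum.inl i)))) := by
  have hne2 : z.1.1.1 ≠ z.1.1.2 := Fin.ne_of_lt z.1.2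
  have hb : (z.2 : ℕ) < k - 1 := z.2.isLt
  obtain ⟨h0, rfl⟩ | ⟨h0, rfl⟩ := h <;>
    constructor <;>
    intro hle hdrop <;>
    simp only [mJ, parJ, sigma_inl_inr, sigma_inr_inl, h0] at hle hdrop ⊢ <;>
    split_ifs at hle hdrop ⊢ <;>
    first
      | omega
      | (subst_vars; simp [hne2, hne2.symm])
      | (rename_i hA hB
         have hA' : ¬(j = z.1.1.1) := fun hh => hA hh.symm
         simp [hA, hB, hA'])
end SnkAux
namespace SnkAux

open Sum SimpleGraph

variable (n k : ℕ)

lemma negCount_cons {V : Type} {G : SimpleGraph V} (σ : Sym2 V → Bool) {x y z : V}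
    (h : G.Adj x y) (p : G.Walk y z) :
    negCount σ (Walk.cons h p) = (if σ s(x, y) then 1 else 0) + negCount σ p := by
  simp only [negCount, Walk.edges_cons, List.filter_cons]
  split_ifs <;> simp <;> omega

lemma negCount_append {V : Type} {G : SimpleGraph V} (σ : Sym2 V → Bool) {x y z : V}
    (p : G.Walk x y) (q : G.Walk y z) :
    negCount σ (p.append q) = negCount σ p + negCount σ q := by
  simp [negCount, Walk.edges_append, List.filter_append]

lemma negCount_reverse {V : Type} {G : SimpleGraph V} (σ : Sym2 V → Bool) {x y : V}
    (p : G.Walk x y) : negCount σ p.reverse = negCount σ p := by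
  simp [negCount, Walk.edges_reverse, List.filter_reverse]

lemma coherB (hk : 2 ≤ k) (j : Fin n) (z z' : {p : Fin n × Fin n // p.1 < p.2} × Fin (k-1))
    (h : snkRel n k (Sum.inr z) (Sum.inr z')) :
    (mJ n k j (Sum.inr z) ≤ k → mJ n k j (Sum.inr z') + 1 = mJ n k j (Sum.inr z) →
      parJ n k j (Sum.inr z) = parJ n k j (Sum.inr z')) ∧
    (mJ n k j (Sum.inr z') ≤ k → mJ n k j (Sum.inr z) + 1 = mJ n k j (Sum.inr z') →
      parJ n k j (Sum.inr z') = parJ n k j (Sum.inr z)) := by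
  obtain ⟨q, t⟩ := z
  obtain ⟨q', t'⟩ := z'
  obtain ⟨rfl, h1⟩ := h
  have hb : (t' : ℕ) < k - 1 := t'.isLt
  constructor <;>
    intro hle hdrop <;>
    simp only [mJ, parJ, h1] at hle hdrop ⊢ <;>
    split_ifs at hle hdrop ⊢ <;>
    first
      | omega
      | simp_all

lemma coher (hk : 2 ≤ k) (j : Fin n) :
    ∀ v u, (Snk n k).Adj v u → mJ n k j v ≤ k → mJ n k j u + 1 = mJ n k j v →
    parJ n k j v = ((parJ n k j u).xor (snkSigma n k s(v, u))) := by
  intro v u hadj hle hdrop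
  rcases (snk_adj n k).mp hadj with ⟨hne, hrel | hrel⟩
  · cases v with
    | inl i =>
      cases u with
      | inl i' => exact hrel.elim
      | inr z => exact (coherA n k hk j i z hrel).1 hle hdrop
    | inr z =>
      cases u with
      | inl i => exact hrel.elim
      | inr z' =>
        rw [sigma_inr_inr]
        simpa using (coherB n k hk j z z' hrel).1 hle hdrop
  · cases v with
    | inl i =>
      cases u with
      | inl i' => exact hrel.elim
      | inr z => exact hrel.elim
    | inr z =>
      cases u with
      | inl i => exact (coherA n k hk j i z hrel).2 hle hdrop
      | inr z' =>
        rw [sigma_inr_inr]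
        simpa using (coherB n k hk j z' z hrel).2 hle hdrop

lemma parity (hk : 2 ≤ k) (j : Fin n) :
    ∀ {v : SnkV n k} (p : (Snk n k).Walk v (Sum.inl j)),
      mJ n k j v ≤ k → p.length = mJ n k j v →
      negCount (snkSigma n k) p % 2 = (if parJ n k j v then 1 else 0) := by
  suffices H : ∀ (v w : SnkV n k) (p : (Snk n k).Walk v w), w = Sum.inl j →
      mJ n k j v ≤ k → p.length = mJ n k j v →
      negCount (snkSigma n k) p % 2 = (if parJ n k j v then 1 else 0) by
    intro v p; exact H v _ p rfl
  intro v w p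
  induction p with
  | nil =>
    rintro rfl _ _
    simp [negCount, mJ, parJ]
  | @cons v u _ h q ih =>
    rintro rfl hle hlen
    have h1 : mJ n k j u ≤ q.length := mJ_le_length n k hk j q
    have h2 : mJ n k j v ≤ mJ n k j u + 1 := mJ_lip n k hk j v u h
    simp only [Walk.length_cons] at hlen
    have hdrop : mJ n k j u + 1 = mJ n k j v := by omega
    have hcoh := coher n k hk j v u h hle hdrop
    have hq := ih rfl (by omega) (by omega)
    rw [negCount_cons]
    rcases hσ : snkSigma n k s(v, u) <;> rcases hpu : parJ n k j u <;>
      simp [hσ, hpu] at hcoh hq ⊢ <;> simp [hcoh, Nat.add_mul_mod_self_left] <;> omega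

end SnkAux
namespace SnkAux

open Sum SimpleGraph

variable (n k : ℕ)

/-- The descending walk from the internal vertex at position `t` of the path of pair `q`
down to the branch vertex `q.1.1`. -/
def dWalk (q : {p : Fin n × Fin n // p.1 < p.2}) :
    (t : ℕ) → (h : t < k - 1) → (Snk n k).Walk (Sum.inr (q, ⟨t, h⟩)) (Sum.inl q.1.1)
  | 0, h => Walk.cons
      (by
        rw [snk_adj]
        exact ⟨by simp, Or.inr (Or.inl ⟨rfl, rfl⟩)⟩)
      Walk.nil
  | (t+1), h => Walk.cons
      (by
        rw [snk_adj]
        refine ⟨by simp [Fin.ext_iff], Or.inr ⟨rfl, rfl⟩⟩)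
      (dWalk q t (by omega))

lemma dWalk_length (q) : ∀ (t : ℕ) (h : t < k - 1), (dWalk n k q t h).length = t + 1 := by
  intro t
  induction t with
  | zero => intro h; rfl
  | succ t ih => intro h; simp [dWalk, ih]

lemma dWalk_negCount (q) : ∀ (t : ℕ) (h : t < k - 1),
    negCount (snkSigma n k) (dWalk n k q t h) = 1 := by
  intro t
  induction t with
  | zero =>
    intro h
    simp [dWalk, negCount_cons, sigma_inr_inl, negCount]
  | succ t ih =>
    intro h
    simp [dWalk, negCount_cons, sigma_inr_inr, ih]

lemma dWalk_support (q) : ∀ (t : ℕ) (h : t < k - 1) (x),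
    x ∈ (dWalk n k q t h).support →
    x = Sum.inl q.1.1 ∨ ∃ s : Fin (k - 1), (s : ℕ) ≤ t ∧ x = Sum.inr (q, s) := by
  intro t
  induction t with
  | zero =>
    intro h x hx
    simp [dWalk, Walk.support_cons] at hx
    rcases hx with rfl | rfl
    · exact Or.inr ⟨⟨0, h⟩, le_refl _, rfl⟩
    · exact Or.inl rfl
  | succ t ih =>
    intro h x hx
    simp only [dWalk, Walk.support_cons, List.mem_cons] at hx
    rcases hx with rfl | hx
    · exact Or.inr ⟨⟨t + 1, h⟩, le_refl _, rfl⟩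
    · rcases ih _ x hx with h' | ⟨s, hs, rfl⟩
      · exact Or.inl h'
      · exact Or.inr ⟨s, by omega, rfl⟩

lemma dWalk_mem (q) : ∀ (t : ℕ) (h : t < k - 1) (s : ℕ) (hs : s < k - 1), s ≤ t →
    Sum.inr (q, ⟨s, hs⟩) ∈ (dWalk n k q t h).support := by
  intro t
  induction t with
  | zero =>
    intro h s hs hst
    interval_cases s
    simp [dWalk]
  | succ t ih =>
    intro h s hs hst
    rcases Nat.eq_or_lt_of_le hst with rfl | hlt
    · simp [dWalk]
    · simp only [dWalk, Walk.support_cons, List.mem_cons]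
      exact Or.inr (ih _ s hs (by omega))

lemma dWalk_isPath (q) : ∀ (t : ℕ) (h : t < k - 1), (dWalk n k q t h).IsPath := by
  intro t
  induction t with
  | zero => intro h; simp [dWalk]
  | succ t ih =>
    intro h
    rw [dWalk, Walk.cons_isPath_iff]
    refine ⟨ih _, fun hmem => ?_⟩
    rcases dWalk_support n k q t _ _ hmem with h' | ⟨s, hs, h'⟩
    · exact absurd h' (by simp)
    · have h2 : (⟨t + 1, h⟩ : Fin (k - 1)) = s := (Prod.ext_iff.mp (Sum.inr.inj h')).2
      have : (s : ℕ) = t + 1 := by rw [← h2]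
      omega

end SnkAux
namespace SnkAux

open Sum SimpleGraph

variable (n k : ℕ)

lemma exact_adj {x y : SnkV n k} :
    (exactDistNeg (Snk n k) (snkSigma n k) k).Adj x y ↔ x ≠ y ∧
      (((Snk n k).dist x y = k ∧ ∀ p : (Snk n k).Walk x y, p.IsPath → p.length = k →
          IsNegWalk (snkSigma n k) p) ∨
       ((Snk n k).dist y x = k ∧ ∀ p : (Snk n k).Walk y x, p.IsPath → p.length = k →
          IsNegWalk (snkSigma n k) p)) :=
  SimpleGraph.fromRel_adj _ _ _

/-- The full subdivided path from `q.1.2` down to `q.1.1`. -/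
def fullWalk (hk : 2 ≤ k) (q : {p : Fin n × Fin n // p.1 < p.2}) :
    (Snk n k).Walk (Sum.inl q.1.2) (Sum.inl q.1.1) :=
  Walk.cons
    (by
      rw [snk_adj]
      exact ⟨by simp, Or.inl (Or.inr ⟨rfl, rfl⟩)⟩)
    (dWalk n k q (k - 2) (by omega))

lemma fullWalk_length (hk : 2 ≤ k) (q) : (fullWalk n k hk q).length = k := by
  simp [fullWalk, dWalk_length]
  omega

lemma dist_pair (hk : 2 ≤ k) (q : {p : Fin n × Fin n // p.1 < p.2}) :
    (Snk n k).dist (Sum.inl q.1.1) (Sum.inl q.1.2) = k := by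
  apply le_antisymm
  · have h := SimpleGraph.dist_le (fullWalk n k hk q).reverse
    rwa [Walk.length_reverse, fullWalk_length] at h
  · have hr : (Snk n k).Reachable (Sum.inl q.1.1) (Sum.inl q.1.2) :=
      ⟨(fullWalk n k hk q).reverse⟩
    obtain ⟨p, hp⟩ := hr.exists_walk_length_eq_dist
    have h := mJ_le_length n k hk q.1.2 p
    have hne : q.1.1 ≠ q.1.2 := Fin.ne_of_lt q.2
    simp [mJ, hne] at h
    omega

lemma dist_branch (hk : 2 ≤ k) {i j : Fin n} (hij : i ≠ j) :
    (Snk n k).dist (Sum.inl i) (Sum.inl j) = k := by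
  rcases lt_or_gt_of_ne hij with h | h
  · exact dist_pair n k hk ⟨(i, j), h⟩
  · rw [SimpleGraph.dist_comm]
    exact dist_pair n k hk ⟨(j, i), h⟩

lemma branch_adj (hk : 2 ≤ k) {i j : Fin n} (hij : i ≠ j) :
    (exactDistNeg (Snk n k) (snkSigma n k) k).Adj (Sum.inl i) (Sum.inl j) := by
  rw [exact_adj]
  refine ⟨by simp [hij], Or.inl ⟨dist_branch n k hk hij, fun p hp hlen => ?_⟩⟩
  have hm : mJ n k j (Sum.inl i) = k := by simp [mJ, hij]
  have := parity n k hk j p (by omega) (by omega)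
  rw [IsNegWalk, Nat.odd_iff]
  simpa [parJ, hij] using this

lemma passes_branch :
    ∀ {x y : SnkV n k} (p : (Snk n k).Walk x y)
      (z z' : {p : Fin n × Fin n // p.1 < p.2} × Fin (k - 1)),
      x = Sum.inr z → y = Sum.inr z' → z.1 ≠ z'.1 →
      ∃ c : Fin n, Sum.inl c ∈ p.support := by
  intro x y p
  induction p with
  | nil =>
    rintro z z' rfl h hne
    exact absurd (congrArg Prod.fst (Sum.inr.inj h)) hne
  | @cons v u w h q ih =>
    rintro z z' rfl rfl hne
    cases u with
    | inl c => exact ⟨c, by simp [Walk.support_cons]⟩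
    | inr w' =>
      have hw : w'.1 = z.1 := by
        rcases (snk_adj n k).mp h with ⟨-, hr | hr⟩
        · exact hr.1.symm
        · exact hr.1
      obtain ⟨c, hc⟩ := ih w' z' rfl rfl (hw ▸ hne)
      exact ⟨c, by simp [Walk.support_cons, hc]⟩

lemma dist_mixed (hk : 2 ≤ k) (z : {p : Fin n × Fin n // p.1 < p.2} × Fin (k - 1)) :
    (Snk n k).dist (Sum.inr z) (Sum.inl z.1.1.1) < k := by
  have hlt : (z.2 : ℕ) < k - 1 := z.2.isLt
  have h := SimpleGraph.dist_le (dWalk n k z.1 (z.2 : ℕ) hlt)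
  rw [dWalk_length] at h
  have : (Sum.inr (z.1, ⟨(z.2 : ℕ), hlt⟩) : SnkV n k) = Sum.inr z := by simp
  rw [this] at h
  omega

lemma dist_same_pair (hk : 2 ≤ k) (q) (t s : Fin (k - 1)) (hst : (s : ℕ) ≤ (t : ℕ)) :
    (Snk n k).dist (Sum.inr (q, t) : SnkV n k) (Sum.inr (q, s)) < k := by
  classical
  have hmem := dWalk_mem n k q (t : ℕ) t.isLt (s : ℕ) s.isLt hst
  have hmem' : (Sum.inr (q, s) : SnkV n k) ∈ (dWalk n k q (t : ℕ) t.isLt).support := by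
    simpa using hmem
  have h1 := SimpleGraph.dist_le ((dWalk n k q (t : ℕ) t.isLt).takeUntil _ hmem')
  have h2 := Walk.length_takeUntil_le (dWalk n k q (t : ℕ) t.isLt) hmem'
  rw [dWalk_length] at h2
  have h3 : (Snk n k).dist (Sum.inr (q, t) : SnkV n k) (Sum.inr (q, s)) ≤ (t : ℕ) + 1 :=
    le_trans h1 h2
  have hlt : (t : ℕ) < k - 1 := t.isLt
  omega

end SnkAux
namespace SnkAux

open Sum SimpleGraph

variable (n k : ℕ)

lemma negCount_copy {V : Type} {G : SimpleGraph V} (σ : Sym2 V → Bool) {x y x' y' : V}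
    (p : G.Walk x y) (hx : x = x') (hy : y = y') :
    negCount σ (p.copy hx hy) = negCount σ p := by
  subst hx; subst hy; rfl

/-- Walk between two internal vertices on different pairs sharing the smaller endpoint,
going through that endpoint. -/
def joinWalk (q q' : {p : Fin n × Fin n // p.1 < p.2}) (t s : Fin (k - 1))
    (hcol : q.1.1 = q'.1.1) :
    (Snk n k).Walk (Sum.inr (q, t) : SnkV n k) (Sum.inr (q', s)) :=
  (dWalk n k q (t : ℕ) t.isLt).append
    (((dWalk n k q' (s : ℕ) s.isLt).reverse).copy (congrArg Sum.inl hcol.symm) rfl)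

lemma joinWalk_length (q q' t s hcol) :
    (joinWalk n k q q' t s hcol).length = (t : ℕ) + (s : ℕ) + 2 := by
  simp [joinWalk, dWalk_length]
  omega

lemma joinWalk_negCount (q q' t s hcol) :
    negCount (snkSigma n k) (joinWalk n k q q' t s hcol) = 2 := by
  rw [joinWalk, negCount_append, negCount_copy, negCount_reverse,
    dWalk_negCount, dWalk_negCount]

lemma joinWalk_isPath (q q' t s hcol) (hq : q ≠ q') :
    (joinWalk n k q q' t s hcol).IsPath := by
  rw [joinWalk, Walk.isPath_def, Walk.support_append]
  set w' := ((dWalk n k q' (s : ℕ) s.isLt).reverse).copy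
    (congrArg Sum.inl hcol.symm) rfl with hw'
  have hp' : w'.IsPath := by
    rw [hw', Walk.isPath_copy]
    exact (dWalk_isPath n k q' (s : ℕ) s.isLt).reverse
  apply List.Nodup.append
  · exact (dWalk_isPath n k q (t : ℕ) t.isLt).support_nodup
  · exact List.Nodup.sublist (List.tail_sublist _) hp'.support_nodup
  · intro x hxA hxB
    have hxW : x ∈ (dWalk n k q' (s : ℕ) s.isLt).support := by
      have : x ∈ w'.support := List.mem_of_mem_tail hxB
      rw [hw', Walk.support_copy, Walk.support_reverse, List.mem_reverse] at this
      exact this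
    rcases dWalk_support n k q' _ _ x hxW with rfl | ⟨u, hu, rfl⟩
    · have hnd := hp'.support_nodup
      rw [w'.support_eq_cons] at hnd
      have hnotin : (Sum.inl q.1.1 : SnkV n k) ∉ w'.support.tail :=
        (List.nodup_cons.mp hnd).1
      have hx' : (Sum.inl q.1.1 : SnkV n k) ∈ w'.support.tail := by
        have he : (Sum.inl q'.1.1 : SnkV n k) = Sum.inl q.1.1 := congrArg Sum.inl hcol.symm
        rwa [he] at hxB
      exact hnotin hx'
    · rcases dWalk_support n k q _ _ _ hxA with h' | ⟨u', hu', h'⟩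
      · exact absurd h' (by simp)
      · exact hq (Prod.ext_iff.mp (Sum.inr.inj h')).1.symm

end SnkAux
namespace SnkAux

open Sum SimpleGraph

variable (n k : ℕ)

def col : SnkV n k → Fin n
  | Sum.inl i => i
  | Sum.inr z => z.1.1.1

lemma col_valid (hk : 2 ≤ k) {x y : SnkV n k}
    (hadj : (exactDistNeg (Snk n k) (snkSigma n k) k).Adj x y) : col n k x ≠ col n k y := by
  intro hcol
  obtain ⟨hne, hrel⟩ := (exact_adj n k).mp hadj
  have hdist : (Snk n k).dist x y = k := by
    rcases hrel with ⟨h, -⟩ | ⟨h, -⟩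
    · exact h
    · rw [SimpleGraph.dist_comm]; exact h
  match x, y, hne, hrel, hdist, hcol with
  | Sum.inl i, Sum.inl i', hne, hrel, hdist, hcol =>
    simp only [col] at hcol
    exact hne (by rw [hcol])
  | Sum.inl i, Sum.inr z, hne, hrel, hdist, hcol =>
    simp only [col] at hcol
    subst hcol
    have hlt := dist_mixed n k hk z
    rw [SimpleGraph.dist_comm] at hlt
    omega
  | Sum.inr z, Sum.inl i, hne, hrel, hdist, hcol =>
    simp only [col] at hcol
    subst hcol
    have hlt := dist_mixed n k hk z
    omega
  | Sum.inr ⟨q, t⟩, Sum.inr ⟨q', s⟩, hne, hrel, hdist, hcol =>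
    simp only [col] at hcol
    by_cases hq : q = q'
    · subst hq
      rcases le_or_gt (s : ℕ) (t : ℕ) with h | h
      · have := dist_same_pair n k hk q t s h
        omega
      · have := dist_same_pair n k hk q s t (le_of_lt h)
        rw [SimpleGraph.dist_comm] at hdist
        omega
    · rcases lt_trichotomy ((t : ℕ) + (s : ℕ) + 2) k with hT | hT | hT
      · have h1 := SimpleGraph.dist_le (joinWalk n k q q' t s hcol)
        rw [joinWalk_length] at h1
        omega
      · -- exhibit the positive path of length k
        have hpath := joinWalk_isPath n k q q' t s hcol hq
        have hlen : (joinWalk n k q q' t s hcol).length = k := by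
          rw [joinWalk_length]; exact hT
        have hnc := joinWalk_negCount n k q q' t s hcol
        rcases hrel with ⟨-, hall⟩ | ⟨-, hall⟩
        · have := hall (joinWalk n k q q' t s hcol) hpath hlen
          rw [IsNegWalk, hnc] at this; exact (Nat.not_odd_iff_even.mpr (by norm_num)) this
        · have := hall (joinWalk n k q q' t s hcol).reverse hpath.reverse
            (by rw [Walk.length_reverse]; exact hlen)
          rw [IsNegWalk, negCount_reverse, hnc] at this; exact (Nat.not_odd_iff_even.mpr (by norm_num)) this
      · -- t + s + 2 > k : the distance is more than k
        have hreach : (Snk n k).Reachable (Sum.inr (q, t) : SnkV n k) (Sum.inr (q', s)) :=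
          ⟨joinWalk n k q q' t s hcol⟩
        obtain ⟨p, hplen⟩ := hreach.exists_walk_length_eq_dist
        rw [hdist] at hplen
        obtain ⟨c, hc⟩ := passes_branch n k p (q, t) (q', s) rfl rfl (by simpa using hq)
        classical
        have hsplit := p.take_spec hc
        have hlen2 : (p.takeUntil _ hc).length + (p.dropUntil _ hc).length = k := by
          rw [← Walk.length_append, hsplit, hplen]
        have h1 := mJ_le_length n k hk c (p.takeUntil _ hc)
        have h2 : mJ n k c (Sum.inr (q', s) : SnkV n k) ≤ (p.dropUntil _ hc).length := by
          have := mJ_le_length n k hk c (p.dropUntil _ hc).reverse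
          rwa [Walk.length_reverse] at this
        have e1 : (q.1.1 : ℕ) < (q.1.2 : ℕ) := q.2
        have e2 : (q'.1.1 : ℕ) < (q'.1.2 : ℕ) := q'.2
        have hne12 : q.1.2 ≠ q'.1.2 := by
          intro h
          exact hq (Subtype.ext (Prod.ext hcol h))
        simp only [mJ] at h1 h2
        split_ifs at h1 h2 <;> simp_all <;> omega

lemma colorable (hk : 2 ≤ k) :
    (exactDistNeg (Snk n k) (snkSigma n k) k).Colorable n :=
  ⟨SimpleGraph.Coloring.mk (col n k) (fun h => col_valid n k hk h)⟩

end SnkAux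

theorem exactDistNeg_Snk_chromatic_eq
    (n k : ℕ) (hn : 2 ≤ n) (hk : 2 ≤ k) :
    (exactDistNeg (Snk n k) (snkSigma n k) k).chromaticNumber = (n : ℕ∞) := by
  apply le_antisymm
  · exact_mod_cast (SnkAux.colorable n k hk).chromaticNumber_le
  · have emb : (⊤ : SimpleGraph (Fin n)) ↪g (exactDistNeg (Snk n k) (snkSigma n k) k) :=
      { toFun := Sum.inl
        inj' := fun a b h => Sum.inl.inj h
        map_rel_iff' := by
          intro a b
          simp only [Function.Embedding.coeFn_mk, top_adj]
          constructor
          · intro h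
            intro hab
            exact h.ne (by rw [hab])
          · intro h
            exact SnkAux.branch_adj n k hk h }
    have hle := SimpleGraph.chromaticNumber_mono_of_hom emb.toHom
    rwa [SimpleGraph.chromaticNumber_top, Fintype.card_fin] at hle
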